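/- For every ε > 0 there is a constant C_ε such that for all Y ≥ 2, the number of nonzero d×d integer matrices (y_{ij}) expressible as y_{ij} = x^{(1)}_i x^{(1)}_j − x^{(2)}_i x^{(2)}_j for some x^{(1)}, x^{(2)} ∈ ℤ^d, with max_{i,j} |y_{ij}| ≤ Y, is at most C_ε Y^{d+ε}. -/
import Mathlib

open Finset

/-- The lattice points in the "hyperbolic" region `|u| ≤ ⌊2Y⌋`, `|v| ≤ ⌊2Y⌋`, `|uv| ≤ ⌊Y⌋`. -/
noncomputable def hypFinset (Y : ℝ) : Finset (ℤ × ℤ) :=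
  ((Finset.Icc (-⌊2*Y⌋) ⌊2*Y⌋) ×ˢ (Finset.Icc (-⌊2*Y⌋) ⌊2*Y⌋)).filter
    (fun p => |p.1 * p.2| ≤ ⌊Y⌋)

lemma qcount (n : ℕ) :
    ((((Finset.Icc 1 n) ×ˢ (Finset.Icc 1 n)).filter
        (fun q : ℕ × ℕ => q.1 * q.2 ≤ n)).card : ℝ) ≤ n * (1 + Real.log n) := by
  have hsub : (((Finset.Icc 1 n) ×ˢ (Finset.Icc 1 n)).filter
        (fun q : ℕ × ℕ => q.1 * q.2 ≤ n)) ⊆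
      (Finset.Icc 1 n).biUnion (fun a => {a} ×ˢ Finset.Icc 1 (n / a)) := by
    intro q hq
    simp only [mem_filter, mem_product, mem_Icc, mem_biUnion, mem_singleton] at *
    obtain ⟨⟨⟨h1, h2⟩, ⟨h3, h4⟩⟩, h5⟩ := hq
    exact ⟨q.1, ⟨h1, h2⟩, rfl, h3, (Nat.le_div_iff_mul_le h1).mpr (by linarith [Nat.mul_comm q.1 q.2])⟩
  have hcard : (((Finset.Icc 1 n) ×ˢ (Finset.Icc 1 n)).filter
        (fun q : ℕ × ℕ => q.1 * q.2 ≤ n)).card ≤ ∑ a ∈ Finset.Icc 1 n, n / a := by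
    refine (Finset.card_le_card hsub).trans ((Finset.card_biUnion_le).trans ?_)
    refine Finset.sum_le_sum fun a _ => ?_
    simp [Nat.card_Icc]
  calc ((((Finset.Icc 1 n) ×ˢ (Finset.Icc 1 n)).filter
        (fun q : ℕ × ℕ => q.1 * q.2 ≤ n)).card : ℝ)
      ≤ ∑ a ∈ Finset.Icc 1 n, ((n / a : ℕ) : ℝ) := by exact_mod_cast hcard
    _ ≤ ∑ a ∈ Finset.Icc 1 n, (n : ℝ) / a := Finset.sum_le_sum fun a _ => Nat.cast_div_le
    _ = (n : ℝ) * ∑ a ∈ Finset.Icc 1 n, (a : ℝ)⁻¹ := by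
        rw [Finset.mul_sum]; exact Finset.sum_congr rfl fun a _ => div_eq_mul_inv _ _
    _ = (n : ℝ) * (harmonic n : ℝ) := by
        congr 1
        rw [harmonic_eq_sum_Icc]
        push_cast
        rfl
    _ ≤ (n : ℝ) * (1 + Real.log n) :=
        mul_le_mul_of_nonneg_left (harmonic_le_one_add_log n) (Nat.cast_nonneg n)

lemma hypcount (Y : ℝ) (hY : 2 ≤ Y) :
    ((hypFinset Y).card : ℝ) ≤ 14 * Y + 4 * (Y * Real.log Y) := by
  classical
  set N : ℤ := ⌊2*Y⌋ with hN
  set K : ℤ := ⌊Y⌋ with hK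
  have hY0 : (0:ℝ) < Y := by linarith
  have hK2 : 2 ≤ K := by
    rw [hK, Int.le_floor]; exact_mod_cast hY
  have hKY : (K : ℝ) ≤ Y := Int.floor_le Y
  have hN0 : 0 ≤ N := by
    rw [hN, Int.le_floor]; push_cast; linarith
  have hNY : (N : ℝ) ≤ 2*Y := Int.floor_le _
  set n : ℕ := K.toNat with hn
  have hnK : (n : ℤ) = K := Int.toNat_of_nonneg (by omega)
  have hnY : (n : ℝ) ≤ Y := by
    have h' : ((n : ℤ) : ℝ) = (n:ℝ) := by push_cast; rfl
    rw [← h', hnK]; exact hKY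
  have hn1 : 1 ≤ n := by omega
  set Q : Finset (ℕ × ℕ) := ((Finset.Icc 1 n) ×ˢ (Finset.Icc 1 n)).filter
        (fun q : ℕ × ℕ => q.1 * q.2 ≤ n) with hQ
  have h4 : ∀ a b c e : ℤ × ℤ, ({a, b, c, e} : Finset (ℤ × ℤ)).card ≤ 4 := by
    intro a b c e
    refine (Finset.card_insert_le _ _).trans (Nat.succ_le_succ ?_)
    refine (Finset.card_insert_le _ _).trans (Nat.succ_le_succ ?_)
    refine (Finset.card_insert_le _ _).trans (Nat.succ_le_succ ?_)
    simp
  have hPsub : (hypFinset Y).filter (fun p => p.1 ≠ 0 ∧ p.2 ≠ 0) ⊆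
      Q.biUnion (fun q => {((q.1 : ℤ), (q.2 : ℤ)), ((q.1 : ℤ), -(q.2 : ℤ)),
        (-(q.1 : ℤ), (q.2 : ℤ)), (-(q.1 : ℤ), -(q.2 : ℤ))}) := by
    intro p hp
    simp only [hypFinset, mem_filter, mem_product, mem_Icc] at hp
    obtain ⟨⟨⟨hp1, hp2⟩, hp3⟩, hne1, hne2⟩ := hp
    have habs : |p.1 * p.2| ≤ K := hp3
    have hmem : (p.1.natAbs, p.2.natAbs) ∈ Q := by
      have hmul : p.1.natAbs * p.2.natAbs ≤ n := by
        rw [Int.abs_eq_natAbs] at habs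
        rw [← Int.natAbs_mul]
        omega
      have h1p : 1 ≤ p.1.natAbs := Int.natAbs_pos.mpr hne1
      have h2p : 1 ≤ p.2.natAbs := Int.natAbs_pos.mpr hne2
      simp only [hQ, mem_filter, mem_product, mem_Icc]
      refine ⟨⟨⟨h1p, ?_⟩, h2p, ?_⟩, hmul⟩
      · calc p.1.natAbs ≤ p.1.natAbs * p.2.natAbs := Nat.le_mul_of_pos_right _ (by omega)
          _ ≤ n := hmul
      · calc p.2.natAbs ≤ p.1.natAbs * p.2.natAbs := Nat.le_mul_of_pos_left _ (by omega)
          _ ≤ n := hmul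
    refine mem_biUnion.mpr ⟨(p.1.natAbs, p.2.natAbs), hmem, ?_⟩
    simp only [mem_insert, mem_singleton, Prod.ext_iff]
    omega
  have hPcard : ((hypFinset Y).filter (fun p => p.1 ≠ 0 ∧ p.2 ≠ 0)).card ≤ 4 * Q.card := by
    refine (Finset.card_le_card hPsub).trans (Finset.card_biUnion_le.trans ?_)
    calc ∑ q ∈ Q, ({((q.1 : ℤ), (q.2 : ℤ)), ((q.1 : ℤ), -(q.2 : ℤ)),
        (-(q.1 : ℤ), (q.2 : ℤ)), (-(q.1 : ℤ), -(q.2 : ℤ))} : Finset (ℤ×ℤ)).card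
        ≤ ∑ q ∈ Q, 4 := Finset.sum_le_sum fun q _ => h4 _ _ _ _
      _ = 4 * Q.card := by rw [Finset.sum_const, smul_eq_mul, Nat.mul_comm]
  have hZcard : ((hypFinset Y).filter (fun p => ¬(p.1 ≠ 0 ∧ p.2 ≠ 0))).card ≤
      2 * (2*N+1).toNat := by
    have hsub : (hypFinset Y).filter (fun p => ¬(p.1 ≠ 0 ∧ p.2 ≠ 0)) ⊆
        ({(0:ℤ)} ×ˢ Finset.Icc (-N) N) ∪ (Finset.Icc (-N) N ×ˢ {(0:ℤ)}) := by
      intro p hp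
      simp only [hypFinset, mem_filter, mem_product, mem_Icc, not_and_or, not_not] at hp
      obtain ⟨⟨⟨hp1, hp2⟩, hp3⟩, hz⟩ := hp
      rcases hz with hz | hz
      · exact Finset.mem_union_left _ (by
          simp only [mem_product, mem_singleton, mem_Icc]; exact ⟨hz, hp2⟩)
      · exact Finset.mem_union_right _ (by
          simp only [mem_product, mem_singleton, mem_Icc]; exact ⟨hp1, hz⟩)
    refine (Finset.card_le_card hsub).trans ((Finset.card_union_le _ _).trans ?_)
    simp [Int.card_Icc]
    omega
  have hsplit : (hypFinset Y).card =
      ((hypFinset Y).filter (fun p => ¬(p.1 ≠ 0 ∧ p.2 ≠ 0))).card +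
      ((hypFinset Y).filter (fun p => p.1 ≠ 0 ∧ p.2 ≠ 0)).card := by
    rw [Nat.add_comm]
    exact (Finset.card_filter_add_card_filter_not _).symm
  have hlog : Real.log n ≤ Real.log Y := Real.log_le_log (by exact_mod_cast hn1) hnY
  have hZr : ((2 * (2*N+1).toNat : ℕ) : ℝ) ≤ 10 * Y := by
    have h1 : ((2*N+1).toNat : ℤ) = 2*N+1 := Int.toNat_of_nonneg (by omega)
    have h2 : (((2*N+1).toNat : ℕ) : ℝ) = 2*(N:ℝ)+1 := by
      have := congrArg (fun z : ℤ => (z : ℝ)) h1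
      push_cast at this
      linarith [this]
    rw [Nat.cast_mul, h2]
    push_cast
    nlinarith
  have hQr := qcount n
  rw [hsplit]
  push_cast
  have hnlog : (n:ℝ) * (1 + Real.log n) ≤ Y * (1 + Real.log Y) := by
    have hlogn0 : 0 ≤ Real.log n := Real.log_natCast_nonneg n
    have hn0' : (0:ℝ) ≤ n := Nat.cast_nonneg n
    nlinarith [hlog]
  have hlogY0 : 0 ≤ Real.log Y := Real.log_nonneg (by linarith)
  have hQr' : (Q.card : ℝ) ≤ Y * (1 + Real.log Y) := le_trans hQr hnlog
  have h2 : ((((hypFinset Y).filter (fun p => p.1 ≠ 0 ∧ p.2 ≠ 0)).card : ℕ) : ℝ) ≤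
      4 * (Y * (1 + Real.log Y)) := by
    calc ((((hypFinset Y).filter (fun p => p.1 ≠ 0 ∧ p.2 ≠ 0)).card : ℕ) : ℝ)
        ≤ ((4 * Q.card : ℕ) : ℝ) := by exact_mod_cast hPcard
      _ = 4 * (Q.card : ℝ) := by push_cast; ring
      _ ≤ 4 * (Y * (1 + Real.log Y)) := by nlinarith
  have h3 : ((((hypFinset Y).filter (fun p => ¬(p.1 ≠ 0 ∧ p.2 ≠ 0))).card : ℕ) : ℝ) ≤
      10 * Y := le_trans (by exact_mod_cast hZcard) hZr
  nlinarith

lemma hypcount_rpow (δ : ℝ) (hδ : 0 < δ) (Y : ℝ) (hY : 2 ≤ Y) :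
    ((hypFinset Y).card : ℝ) ≤ (14 + 4/δ) * Y ^ (1+δ) := by
  have hY0 : (0:ℝ) < Y := by linarith
  have h1 : (1:ℝ) ≤ Y ^ δ := by
    calc (1:ℝ) = 1 ^ δ := (Real.one_rpow δ).symm
      _ ≤ Y ^ δ := Real.rpow_le_rpow zero_le_one (by linarith) hδ.le
  have h2 : Real.log Y ≤ Y ^ δ / δ := Real.log_le_rpow_div hY0.le hδ
  have h3 : Y ^ (1+δ) = Y * Y ^ δ := by
    rw [Real.rpow_add hY0, Real.rpow_one]
  have h4 := hypcount Y hY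
  have hlogY0 : 0 ≤ Real.log Y := Real.log_nonneg (by linarith)
  rw [h3]
  have h2' : Real.log Y * δ ≤ Y ^ δ := (le_div_iff₀ hδ).mp h2
  have h5 : 4 * (Y * Real.log Y) ≤ (4/δ) * (Y * Y ^ δ) := by
    rw [div_mul_eq_mul_div, le_div_iff₀ hδ]
    nlinarith [h2', hY0]
  nlinarith

open scoped Classical in
/-- A chosen witness for a representable matrix, in `(u, v) = (x1 - x2, x1 + x2)` coordinates. -/
noncomputable def witPair {d : ℕ} (y : Matrix (Fin d) (Fin d) ℤ) : Fin d → ℤ × ℤ :=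
  if h : ∃ x1 x2 : Fin d → ℤ, ∀ i j, y i j = x1 i * x1 j - x2 i * x2 j then
    fun k => (h.choose k - h.choose_spec.choose k, h.choose k + h.choose_spec.choose k)
  else fun _ => 0

lemma witPair_spec {d : ℕ} (y : Matrix (Fin d) (Fin d) ℤ)
    (h : ∃ x1 x2 : Fin d → ℤ, ∀ i j, y i j = x1 i * x1 j - x2 i * x2 j) :
    ∀ i j, 2 * y i j =
      (witPair y i).1 * (witPair y j).2 + (witPair y i).2 * (witPair y j).1 := by
  intro i j
  simp only [witPair]
  rw [dif_pos h]
  rw [h.choose_spec.choose_spec i j]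
  ring

lemma witPair_mem {d : ℕ} (Y : ℝ) (hY : 2 ≤ Y) (y : Matrix (Fin d) (Fin d) ℤ)
    (hy : y ∈ {y : Matrix (Fin d) (Fin d) ℤ |
            y ≠ 0 ∧
            (∃ x1 x2 : Fin d → ℤ, ∀ i j, y i j = x1 i * x1 j - x2 i * x2 j) ∧
            (∀ i j, ((|y i j| : ℤ) : ℝ) ≤ Y)}) :
    ∀ k, witPair y k ∈ hypFinset Y := by
  obtain ⟨hy0, hex, hb⟩ := hy
  have hspec := witPair_spec y hex
  let u : Fin d → ℤ := fun k => (witPair y k).1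
  let v : Fin d → ℤ := fun k => (witPair y k).2
  have hspec : ∀ i j, 2 * y i j = u i * v j + v i * u j := fun i j => hspec i j
  have hdiag : ∀ i, u i * v i = y i i := by
    intro i
    have h := hspec i i
    have h2 : 2 * (u i * v i) = 2 * y i i := by
      rw [h]; ring
    exact mul_left_cancel₀ two_ne_zero h2
  have habs : ∀ i j, |y i j| ≤ ⌊Y⌋ := by
    intro i j
    rw [Int.le_floor]
    exact_mod_cast hb i j
  have hKN : (⌊Y⌋ : ℤ) ≤ ⌊2*Y⌋ := Int.floor_le_floor (by linarith)
  have h2KN : 2 * ⌊Y⌋ ≤ ⌊2*Y⌋ := by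
    rw [Int.le_floor]
    push_cast
    linarith [Int.floor_le Y]
  have hune : ∃ j, u j ≠ 0 := by
    by_contra hall
    push_neg at hall
    apply hy0
    ext i j
    have h := hspec i j
    simp only [Matrix.zero_apply]
    rw [hall i, hall j] at h
    linarith
  have hvne : ∃ j, v j ≠ 0 := by
    by_contra hall
    push_neg at hall
    apply hy0
    ext i j
    have h := hspec i j
    simp only [Matrix.zero_apply]
    rw [hall i, hall j] at h
    linarith
  intro k
  have hdk : |u k * v k| ≤ ⌊Y⌋ := by rw [hdiag k]; exact habs k k
  have hub : |u k| ≤ ⌊2*Y⌋ := by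
    rcases eq_or_ne (v k) 0 with h0 | h0
    · obtain ⟨j, hj⟩ := hvne
      have h2 : 2 * y k j = u k * v j := by
        have h := hspec k j
        rw [h0] at h
        linarith
      have habsmul : |u k| * |v j| = 2 * |y k j| := by
        rw [← abs_mul, ← h2, abs_mul]
        simp
      have h1le : (1:ℤ) ≤ |v j| := Int.one_le_abs (by exact hj)
      calc |u k| ≤ |u k| * |v j| := le_mul_of_one_le_right (abs_nonneg _) h1le
        _ = 2 * |y k j| := habsmul
        _ ≤ 2 * ⌊Y⌋ := by linarith [habs k j]
        _ ≤ ⌊2*Y⌋ := h2KN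
    · have h1le : (1:ℤ) ≤ |v k| := Int.one_le_abs (by exact h0)
      calc |u k| ≤ |u k| * |v k| := le_mul_of_one_le_right (abs_nonneg _) h1le
        _ = |u k * v k| := (abs_mul _ _).symm
        _ ≤ ⌊Y⌋ := hdk
        _ ≤ ⌊2*Y⌋ := hKN
  have hvb : |v k| ≤ ⌊2*Y⌋ := by
    rcases eq_or_ne (u k) 0 with h0 | h0
    · obtain ⟨j, hj⟩ := hune
      have h2 : 2 * y k j = v k * u j := by
        have h := hspec k j
        rw [h0] at h
        linarith
      have habsmul : |v k| * |u j| = 2 * |y k j| := by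
        rw [← abs_mul, ← h2, abs_mul]
        simp
      have h1le : (1:ℤ) ≤ |u j| := Int.one_le_abs (by exact hj)
      calc |v k| ≤ |v k| * |u j| := le_mul_of_one_le_right (abs_nonneg _) h1le
        _ = 2 * |y k j| := habsmul
        _ ≤ 2 * ⌊Y⌋ := by linarith [habs k j]
        _ ≤ ⌊2*Y⌋ := h2KN
    · have h1le : (1:ℤ) ≤ |u k| := Int.one_le_abs (by exact h0)
      calc |v k| ≤ |u k| * |v k| := by
            rw [mul_comm]; exact le_mul_of_one_le_right (abs_nonneg _) h1le
        _ = |u k * v k| := (abs_mul _ _).symm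
        _ ≤ ⌊Y⌋ := hdk
        _ ≤ ⌊2*Y⌋ := hKN
  simp only [hypFinset, mem_filter, mem_product, mem_Icc]
  obtain ⟨hu1, hu2⟩ := abs_le.mp hub
  obtain ⟨hv1, hv2⟩ := abs_le.mp hvb
  exact ⟨⟨⟨hu1, hu2⟩, hv1, hv2⟩, hdk⟩

/-- the number of nonzero `d × d` integer matrices of the form
`y_{ij} = x⁽¹⁾ᵢ x⁽¹⁾ⱼ − x⁽²⁾ᵢ x⁽²⁾ⱼ` with all entries bounded by `Y` is `O_ε(Y^{d+ε})`. -/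
theorem stmt12 (d : ℕ) (hd : 1 ≤ d) :
    ∀ ε : ℝ, 0 < ε → ∃ C : ℝ, 0 < C ∧
      ∀ Y : ℝ, 2 ≤ Y →
        (Set.ncard {y : Matrix (Fin d) (Fin d) ℤ |
            y ≠ 0 ∧
            (∃ x1 x2 : Fin d → ℤ, ∀ i j, y i j = x1 i * x1 j - x2 i * x2 j) ∧
            (∀ i j, ((|y i j| : ℤ) : ℝ) ≤ Y)} : ℝ) ≤
          C * Y ^ ((d : ℝ) + ε) := by
  intro ε hε
  have hd0 : (0:ℝ) < (d:ℝ) := by exact_mod_cast hd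
  set δ : ℝ := ε / d with hδdef
  have hδ : 0 < δ := div_pos hε hd0
  refine ⟨(14 + 4/δ)^d, by positivity, ?_⟩
  intro Y hY
  have hY0 : (0:ℝ) < Y := by linarith
  set S := {y : Matrix (Fin d) (Fin d) ℤ |
            y ≠ 0 ∧
            (∃ x1 x2 : Fin d → ℤ, ∀ i j, y i j = x1 i * x1 j - x2 i * x2 j) ∧
            (∀ i j, ((|y i j| : ℤ) : ℝ) ≤ Y)} with hS
  have hmaps : ∀ y ∈ S, witPair y ∈
      (↑(Fintype.piFinset fun _ : Fin d => hypFinset Y) : Set (Fin d → ℤ × ℤ)) := by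
    intro y hy
    rw [Finset.mem_coe, Fintype.mem_piFinset]
    exact witPair_mem Y hY y hy
  have hinj : Set.InjOn witPair S := by
    intro y hy y' hy' hf
    have h1 := witPair_spec y hy.2.1
    have h2 := witPair_spec y' hy'.2.1
    ext i j
    have e1 := h1 i j
    rw [hf] at e1
    have e2 := h2 i j
    linarith
  have hcard := Set.ncard_le_ncard_of_injOn witPair hmaps hinj (Finset.finite_toSet _)
  rw [Set.ncard_coe_finset] at hcard
  have hpi : (Fintype.piFinset fun _ : Fin d => hypFinset Y).card = (hypFinset Y).card ^ d := by
    rw [Fintype.card_piFinset]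
    simp
  rw [hpi] at hcard
  have hhyp := hypcount_rpow δ hδ Y hY
  have hc0 : (0:ℝ) ≤ (hypFinset Y).card := Nat.cast_nonneg _
  calc (S.ncard : ℝ) ≤ (((hypFinset Y).card ^ d : ℕ) : ℝ) := by exact_mod_cast hcard
    _ = ((hypFinset Y).card : ℝ) ^ d := by push_cast; ring
    _ ≤ ((14 + 4/δ) * Y ^ (1+δ)) ^ d := pow_le_pow_left₀ hc0 hhyp d
    _ = (14 + 4/δ)^d * (Y ^ (1+δ)) ^ d := mul_pow _ _ _
    _ = (14 + 4/δ)^d * Y ^ ((d:ℝ) + ε) := by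
        congr 1
        rw [← Real.rpow_natCast (Y ^ (1+δ)) d, ← Real.rpow_mul hY0.le]
        congr 1
        rw [hδdef]
        field_simp
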